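/- arXiv:2008.06128 — 3 statements merged into one kernel-verified Lean document; each statement's English description precedes it below -/
import Mathlib

section
/- For any integers a and b, we have x_a t_{n-1,a} + u_{b-1} t_{n-1,b-1} = x_b t_{n-1,b} + u_{a-1} t_{n-1,a-1}. -/
/- Setting: a semifield `K` (commutative associative addition `add`, multiplicative
abelian group, distributivity), with `u, x : ℤ → K` being `n`-periodic families. -/

variable {K : Type*} [CommGroup K]

/-- The nonempty sum `f 0 + f 1 + ⋯ + f r` with respect to the binary operation `add`. -/
def addSum (add : K → K → K) (f : ℕ → K) : ℕ → K
  | 0 => f 0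
  | r + 1 => add (addSum add f r) (f (r + 1))

/-- The element `t_{r,j} = Σ_{k=0}^{r} (∏_{i=1}^{k} x_{j+i}) · (∏_{i=k+1}^{r} u_{j+i})`. -/
def tpoly (add : K → K → K) (u x : ℤ → K) (r : ℕ) (j : ℤ) : K :=
  addSum add
    (fun k => (∏ i ∈ Finset.Icc 1 k, x (j + i)) * ∏ i ∈ Finset.Icc (k + 1) r, u (j + i)) r

section Aux

variable (add : K → K → K)

lemma addSum_congr' {f g : ℕ → K} : ∀ (r : ℕ), (∀ k, k ≤ r → f k = g k) →
    addSum add f r = addSum add g r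
  | 0, h => h 0 le_rfl
  | r + 1, h => by
      simp only [addSum]
      rw [addSum_congr' r (fun k hk => h k (hk.trans r.le_succ)), h (r + 1) le_rfl]

lemma mul_addSum (hdistrib : ∀ a b c : K, a * add b c = add (a * b) (a * c))
    (c : K) (f : ℕ → K) : ∀ r, c * addSum add f r = addSum add (fun k => c * f k) r
  | 0 => rfl
  | r + 1 => by
      simp only [addSum, hdistrib, mul_addSum hdistrib c f r]

lemma addSum_shift (hassoc : ∀ a b c : K, add (add a b) c = add a (add b c))
    (f : ℕ → K) : ∀ r, addSum add f (r + 1) = add (f 0) (addSum add (fun k => f (k + 1)) r)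
  | 0 => rfl
  | r + 1 => by
      rw [show addSum add f (r + 1 + 1) = add (addSum add f (r + 1)) (f (r + 1 + 1)) from rfl,
        addSum_shift hassoc f r, hassoc]
      rfl

lemma shift_prod (F : ℤ → K) (j : ℤ) (a b : ℕ) :
    ∏ i ∈ Finset.Ico a b, F (j + 1 + i) = ∏ i ∈ Finset.Ico (a + 1) (b + 1), F (j + i) := by
  rw [← Finset.prod_Ico_add' (fun i : ℕ => F (j + i)) a b 1]
  refine Finset.prod_congr rfl fun i _ => ?_
  push_cast
  ring_nf

lemma periodic_step (n : ℕ) (hn : 0 < n) (f : ℤ → K) (hf : ∀ i : ℤ, f (i + n) = f i)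
    (j : ℤ) : ∏ i ∈ Finset.Icc 0 (n - 1), f (j + 1 + i) = ∏ i ∈ Finset.Icc 0 (n - 1), f (j + i) := by
  have h1 : Finset.Icc 0 (n - 1) = Finset.Ico 0 n := by ext i; simp [Finset.mem_Icc]; omega
  have h2 : Finset.Ico 0 n = insert 0 (Finset.Ico 1 n) := by
    ext i; simp [Finset.mem_Ico]; omega
  rw [h1, shift_prod, show n + 1 = n + 1 from rfl, Finset.prod_Ico_succ_top (by omega : 1 ≤ n),
    h2, Finset.prod_insert (by simp), show f (j + (n : ℕ)) = f j from hf j,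
    show f (j + ((0:ℕ):ℤ)) = f j by norm_num, mul_comm]

lemma periodic_const (n : ℕ) (hn : 0 < n) (f : ℤ → K) (hf : ∀ i : ℤ, f (i + n) = f i)
    (a b : ℤ) : ∏ i ∈ Finset.Icc 0 (n - 1), f (a + i) = ∏ i ∈ Finset.Icc 0 (n - 1), f (b + i) := by
  suffices h : ∀ j : ℤ, ∏ i ∈ Finset.Icc 0 (n - 1), f (j + i) = ∏ i ∈ Finset.Icc 0 (n - 1), f (0 + i) by
    rw [h a, h b]
  intro j
  induction j using Int.induction_on with
  | zero => rfl
  | succ k ih => rw [show ((k:ℤ) + 1) = (k:ℤ) + 1 from rfl, periodic_step n hn f hf, ih]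
  | pred k ih => rw [← ih, ← periodic_step n hn f hf (-(k:ℤ) - 1)]; norm_num


lemma xmul (n : ℕ) (hdistrib : ∀ a b c : K, a * add b c = add (a * b) (a * c))
    (u x : ℤ → K) (j : ℤ) :
    x j * tpoly add u x (n - 1) j =
      addSum add (fun k => (∏ i ∈ Finset.Icc 0 k, x (j + i)) *
        ∏ i ∈ Finset.Icc (k + 1) (n - 1), u (j + i)) (n - 1) := by
  rw [tpoly, mul_addSum add hdistrib]
  refine addSum_congr' add _ (fun k _ => ?_)
  rw [← mul_assoc]
  congr 1
  rw [show Finset.Icc 0 k = insert 0 (Finset.Icc 1 k) by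
      ext i; simp [Finset.mem_Icc]; omega,
    Finset.prod_insert (by simp)]
  norm_num

lemma umul (n : ℕ) (hn : 0 < n) (hdistrib : ∀ a b c : K, a * add b c = add (a * b) (a * c))
    (u x : ℤ → K) (hu : ∀ i : ℤ, u (i + n) = u i) (j : ℤ) :
    u (j - 1) * tpoly add u x (n - 1) (j - 1) =
      addSum add (fun k => (∏ i ∈ Finset.Ico 0 k, x (j + i)) *
        ∏ i ∈ Finset.Icc k (n - 1), u (j + i)) (n - 1) := by
  rw [tpoly, mul_addSum add hdistrib]
  refine addSum_congr' add _ (fun k hk => ?_)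
  have e1 : (∏ i ∈ Finset.Icc 1 k, x (j - 1 + i)) = ∏ i ∈ Finset.Ico 0 k, x (j + i) := by
    rw [← Finset.Ico_add_one_right_eq_Icc, ← shift_prod x (j - 1) 0 k]
    refine Finset.prod_congr rfl fun i _ => ?_
    ring_nf
  have e2 : (∏ i ∈ Finset.Icc (k + 1) (n - 1), u (j - 1 + i)) =
      ∏ i ∈ Finset.Ico k (n - 1), u (j + i) := by
    rw [show Finset.Icc (k + 1) (n - 1) = Finset.Ico (k + 1) ((n - 1) + 1) by
        rw [Finset.Ico_add_one_right_eq_Icc], ← shift_prod u (j - 1) k (n - 1)]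
    refine Finset.prod_congr rfl fun i _ => ?_
    ring_nf
  rw [e1, e2, show Finset.Icc k (n - 1) = insert (n - 1) (Finset.Ico k (n - 1)) by
      ext i; simp [Finset.mem_Icc, Finset.mem_Ico]; omega,
    Finset.prod_insert (by simp)]
  have e3 : u (j + ((n - 1 : ℕ) : ℤ)) = u (j - 1) := by
    rw [show j + ((n - 1 : ℕ) : ℤ) = (j - 1) + (n : ℕ) by push_cast; omega, hu]
  rw [e3, mul_left_comm]

lemma rearr (hassoc : ∀ a b c : K, add (add a b) c = add a (add b c))
    (hcomm : ∀ a b : K, add a b = add b a) (p q r s : K) :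
    add (add p q) (add r s) = add (add s q) (add r p) := by
  rw [hcomm p q, hassoc, hcomm s q, hassoc q s]
  congr 1
  rw [hcomm r s, ← hassoc, hcomm p s, hassoc, hcomm p r]


lemma xdecomp (m : ℕ) (u x : ℤ → K) (j : ℤ) :
    addSum add (fun k => (∏ i ∈ Finset.Icc 0 k, x (j + i)) *
        ∏ i ∈ Finset.Icc (k + 1) (m + 1), u (j + i)) (m + 1) =
      add (addSum add (fun k => (∏ i ∈ Finset.Icc 0 k, x (j + i)) *
        ∏ i ∈ Finset.Icc (k + 1) (m + 1), u (j + i)) m)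
        (∏ i ∈ Finset.Icc 0 (m + 1), x (j + i)) := by
  simp only [addSum]
  congr 1
  rw [show Finset.Icc (m + 1 + 1) (m + 1) = ∅ from Finset.Icc_eq_empty (by omega),
    Finset.prod_empty, mul_one]

lemma udecomp (hassoc : ∀ a b c : K, add (add a b) c = add a (add b c))
    (m : ℕ) (u x : ℤ → K) (j : ℤ) :
    addSum add (fun k => (∏ i ∈ Finset.Ico 0 k, x (j + i)) *
        ∏ i ∈ Finset.Icc k (m + 1), u (j + i)) (m + 1) =
      add (∏ i ∈ Finset.Icc 0 (m + 1), u (j + i))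
        (addSum add (fun k => (∏ i ∈ Finset.Icc 0 k, x (j + i)) *
          ∏ i ∈ Finset.Icc (k + 1) (m + 1), u (j + i)) m) := by
  rw [addSum_shift add hassoc]
  refine congrArg₂ add ?_ ?_
  · simp
  · exact addSum_congr' add m (fun k _ => by simp only [Finset.Ico_add_one_right_eq_Icc])

end Aux

/-- Lemma (e): `x_a t_{n-1,a} + u_{b-1} t_{n-1,b-1} = x_b t_{n-1,b} + u_{a-1} t_{n-1,a-1}`. -/
theorem tpoly_exchange (n : ℕ) (hn : 0 < n) (add : K → K → K)
    (hadd_assoc : ∀ a b c : K, add (add a b) c = add a (add b c))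
    (hadd_comm : ∀ a b : K, add a b = add b a)
    (hdistrib : ∀ a b c : K, a * add b c = add (a * b) (a * c))
    (u x : ℤ → K) (hu : ∀ i : ℤ, u (i + n) = u i) (hx : ∀ i : ℤ, x (i + n) = x i)
    (a b : ℤ) :
    add (x a * tpoly add u x (n - 1) a) (u (b - 1) * tpoly add u x (n - 1) (b - 1)) =
      add (x b * tpoly add u x (n - 1) b) (u (a - 1) * tpoly add u x (n - 1) (a - 1)) := by
  have hX := periodic_const n hn x hx a b
  have hU := periodic_const n hn u hu b a
  rw [xmul add n hdistrib u x a, xmul add n hdistrib u x b,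
    umul add n hn hdistrib u x hu a, umul add n hn hdistrib u x hu b]
  obtain ⟨m, rfl⟩ : ∃ m, n = m + 1 := ⟨n - 1, by omega⟩
  simp only [Nat.add_sub_cancel] at hX hU ⊢
  cases m with
  | zero =>
    show add _ _ = add _ _
    simp only [addSum]
    norm_num at hX hU ⊢
    rw [hX, hU, hadd_comm]
  | succ m =>
    rw [xdecomp add m u x a, xdecomp add m u x b, udecomp add hadd_assoc m u x a,
      udecomp add hadd_assoc m u x b, hX, hU]
    exact rearr add hadd_assoc hadd_comm _ _ _ _
end

section
/- If y = f_u(x), then y_1 y_2 ⋯ y_n · x_1 x_2 ⋯ x_n = (u_1 u_2 ⋯ u_n)^2. -/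
/- Setting: a semifield `K` (commutative associative addition `add`, multiplicative
abelian group, distributivity), a fixed `u ∈ K^n`, all `n`-tuples extended
`n`-periodically to families indexed by `ℤ`. -/

variable {K : Type*} [CommGroup K]

open Fin.IntCast in
/-- The `n`-periodic extension of an `n`-tuple to a family indexed by `ℤ`. -/
def extend {n : ℕ} [NeZero n] (v : Fin n → K) : ℤ → K := fun i => v (i : Fin n)

/-- The map `f_u : K^n → K^n`, sending `x` to the `n`-tuple `y` with
`y_i = u_i · (u_{i-1} t_{n-1,i-1}) / (x_{i+1} t_{n-1,i+1})`. -/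
def fu {n : ℕ} [NeZero n] (add : K → K → K) (u : Fin n → K) (x : Fin n → K) : Fin n → K :=
  fun i =>
    u i * (extend u ((i : ℤ) - 1) * tpoly add (extend u) (extend x) (n - 1) ((i : ℤ) - 1)) /
      (extend x ((i : ℤ) + 1) * tpoly add (extend u) (extend x) (n - 1) ((i : ℤ) + 1))

open Fin.IntCast Fin.CommRing

/-- Theorem: if `y = f_u(x)`, then `y_1 ⋯ y_n · x_1 ⋯ x_n = (u_1 ⋯ u_n)^2`. -/
theorem fu_prod (n : ℕ) [NeZero n] (add : K → K → K)
    (hadd_assoc : ∀ a b c : K, add (add a b) c = add a (add b c))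
    (hadd_comm : ∀ a b : K, add a b = add b a)
    (hdistrib : ∀ a b c : K, a * add b c = add (a * b) (a * c))
    (u : Fin n → K)
    (x y : Fin n → K) (hy : y = fu add u x) :
    (∏ i, y i) * ∏ i, x i = (∏ i, u i) ^ 2 := by
  subst hy
  -- tpoly depends on `j` only through its residue mod `n`
  have hper : ∀ (j j' : ℤ), ((j : Fin n) = (j' : Fin n)) →
      tpoly add (extend u) (extend x) (n-1) j = tpoly add (extend u) (extend x) (n-1) j' := by
    intro j j' h
    unfold tpoly
    congr 1
    funext k
    congr 1
    · refine Finset.prod_congr rfl fun i _ => ?_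
      show x (((j + (i:ℤ)) : ℤ) : Fin n) = x (((j' + (i:ℤ)) : ℤ) : Fin n)
      push_cast
      rw [h]
    · refine Finset.prod_congr rfl fun i _ => ?_
      show u (((j + (i:ℤ)) : ℤ) : Fin n) = u (((j' + (i:ℤ)) : ℤ) : Fin n)
      push_cast
      rw [h]
  set T : Fin n → K := fun m => tpoly add (extend u) (extend x) (n-1) ((m : ℕ) : ℤ) with hT
  have hcast : ∀ i : Fin n, ((i : ℤ) : Fin n) = i := by
    intro i
    simp
  have hfu : ∀ i : Fin n, fu add u x i
      = u i * (u (i - 1) * T (i - 1)) / (x (i + 1) * T (i + 1)) := by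
    intro i
    have h1 : (((i : ℤ) - 1 : ℤ) : Fin n) = i - 1 := by push_cast; simp
    have h2 : (((i : ℤ) + 1 : ℤ) : Fin n) = i + 1 := by push_cast; simp
    unfold fu
    rw [hper ((i:ℤ) - 1) (((i - 1 : Fin n) : ℕ) : ℤ) (by rw [h1]; push_cast; simp),
      hper ((i:ℤ) + 1) (((i + 1 : Fin n) : ℕ) : ℤ) (by rw [h2]; push_cast; simp)]
    simp only [extend, h1, h2]
    rfl
  rw [Finset.prod_congr rfl fun i _ => hfu i]
  rw [Finset.prod_div_distrib, Finset.prod_mul_distrib, Finset.prod_mul_distrib,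
    Finset.prod_mul_distrib]
  have e1 : (∏ i : Fin n, u (i - 1)) = ∏ i : Fin n, u i :=
    Fintype.prod_equiv (Equiv.subRight (1 : Fin n)) _ _ (fun i => rfl)
  have e2 : (∏ i : Fin n, T (i - 1)) = ∏ i : Fin n, T i :=
    Fintype.prod_equiv (Equiv.subRight (1 : Fin n)) _ _ (fun i => rfl)
  have e3 : (∏ i : Fin n, x (i + 1)) = ∏ i : Fin n, x i :=
    Fintype.prod_equiv (Equiv.addRight (1 : Fin n)) _ _ (fun i => rfl)
  have e4 : (∏ i : Fin n, T (i + 1)) = ∏ i : Fin n, T i :=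
    Fintype.prod_equiv (Equiv.addRight (1 : Fin n)) _ _ (fun i => rfl)
  rw [e1, e2, e3, e4]
  generalize (∏ i : Fin n, u i) = a
  generalize (∏ i : Fin n, x i) = b
  generalize (∏ i : Fin n, T i) = p
  rw [sq, div_mul_eq_mul_div, div_eq_iff_eq_mul]
  simp [mul_comm, mul_assoc, mul_left_comm]
end

section
/- For any snake λ (i.e., λ ∈ ℤ^n with λ_1 ≥ λ_2 ≥ ⋯ ≥ λ_n), the alternant a_{λ+ρ} is a multiple of a_ρ in the Laurent polynomial ring k[x_1^{±1},…,x_n^{±1}]. -/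
/-- The ring of Laurent polynomials `k[x_1^{±1}, …, x_n^{±1}]` in `n` variables over `k`,
realized as the monoid algebra of the group of Laurent monomials
(exponent vectors in `Fin n → ℤ`). -/
abbrev Laurent (k : Type*) [CommRing k] (n : ℕ) : Type _ := AddMonoidAlgebra k (Fin n → ℤ)

/-- The alternant `a_λ = Σ_{w ∈ S_n} sgn(w) x_{w(1)}^{λ_1} ⋯ x_{w(n)}^{λ_n}`. -/
noncomputable def alternant (k : Type*) [CommRing k] (n : ℕ) (lam : Fin n → ℤ) : Laurent k n :=
  ∑ w : Equiv.Perm (Fin n),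
    (Equiv.Perm.sign w : ℤ) • AddMonoidAlgebra.single (lam ∘ ⇑w⁻¹) (1 : k)

/-- The staircase `ρ = (n-1, n-2, …, 1, 0)` (written with `0`-based indices). -/
def rho (n : ℕ) : Fin n → ℤ := fun i => (n : ℤ) - 1 - (i : ℕ)

namespace AlternantAux

open MvPolynomial

variable {n : ℕ}

/-- The `ℕ`-exponent alternant, inside the polynomial ring `ℤ[x_1, …, x_n]`. -/
noncomputable def altM (n : ℕ) (e : Fin n → ℕ) : MvPolynomial (Fin n) ℤ :=
  ∑ w : Equiv.Perm (Fin n),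
    (Equiv.Perm.sign w : ℤ) •
      monomial (Finsupp.equivFunOnFinite.symm (e ∘ ⇑w⁻¹)) (1 : ℤ)

lemma monomial_eq_prod (v : Fin n → ℕ) :
    (monomial (Finsupp.equivFunOnFinite.symm v) (1 : ℤ) : MvPolynomial (Fin n) ℤ) =
      ∏ j, (X j : MvPolynomial (Fin n) ℤ) ^ v j := by
  rw [monomial_eq, Finsupp.prod_fintype]
  · simp
  · intro i; exact pow_zero _

/-- The alternant as a determinant. -/
lemma altM_eq_det (e : Fin n → ℕ) :
    altM n e = Matrix.det (Matrix.of fun i j => (X j : MvPolynomial (Fin n) ℤ) ^ e i) := by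
  rw [Matrix.det_apply, altM]
  refine Fintype.sum_equiv (Equiv.inv (Equiv.Perm (Fin n))) _ _ fun w => ?_
  rw [monomial_eq_prod]
  simp [Equiv.inv_apply, Equiv.Perm.sign_inv, Units.smul_def, Function.comp]

/-- The Vandermonde product. -/
noncomputable def vandM (n : ℕ) : MvPolynomial (Fin n) ℤ :=
  ∏ i : Fin n, ∏ j ∈ Finset.Ioi i, ((X j : MvPolynomial (Fin n) ℤ) - X i)

lemma altM_rho_eq :
    altM n (fun i => n - 1 - (i : ℕ)) =
      ((Equiv.Perm.sign (Fin.revPerm : Equiv.Perm (Fin n)) : ℤ) : MvPolynomial (Fin n) ℤ) *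
        vandM n := by
  rw [altM_eq_det, ← Matrix.det_transpose]
  have h : Matrix.transpose (Matrix.of fun (i j : Fin n) => (X j : MvPolynomial (Fin n) ℤ) ^ (n - 1 - (i : ℕ))) =
      (Matrix.vandermonde fun i : Fin n => (X i : MvPolynomial (Fin n) ℤ)).submatrix id
        Fin.revPerm := by
    funext i j
    simp only [Matrix.transpose_apply, Matrix.of_apply, Matrix.submatrix_apply, id_eq,
      Matrix.vandermonde_apply]
    congr 1
    simp [Fin.val_rev]
    omega
  rw [h, Matrix.det_permute', Matrix.det_vandermonde, vandM]

/-- The "merge `i` into `j`" substitution. -/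
def mrg (i j : Fin n) : Fin n → Fin n := fun t => if t = i then j else t

lemma mrg_comp_swap {i j : Fin n} (h : i ≠ j) :
    mrg i j ∘ ⇑(Equiv.swap i j) = mrg i j := by
  funext t
  by_cases hti : t = i
  · subst hti; simp [mrg, Equiv.swap_apply_left, h.symm]
  · by_cases htj : t = j
    · subst htj; simp [mrg, Equiv.swap_apply_right, h.symm]
    · simp [mrg, Equiv.swap_apply_of_ne_of_ne hti htj, hti]

lemma altM_rename (τ : Equiv.Perm (Fin n)) (e : Fin n → ℕ) :
    rename ⇑τ (altM n e) = (Equiv.Perm.sign τ : ℤ) • altM n e := by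
  rw [altM, map_sum, Finset.smul_sum]
  refine Fintype.sum_equiv (Equiv.mulLeft τ) _ _ fun w => ?_
  rw [map_zsmul, rename_monomial]
  have hmap : Finsupp.mapDomain ⇑τ (Finsupp.equivFunOnFinite.symm (e ∘ ⇑w⁻¹)) =
      Finsupp.equivFunOnFinite.symm (e ∘ ⇑(τ * w)⁻¹) := by
    ext a
    rw [Finsupp.mapDomain_equiv_apply (f := τ)]
    simp only [Finsupp.coe_equivFunOnFinite_symm, Function.comp_apply, mul_inv_rev,
      Equiv.Perm.coe_mul]
    rfl
  rw [hmap, smul_smul]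
  congr 1
  simp only [Equiv.coe_mulLeft, Equiv.Perm.sign_mul, Units.val_mul, Int.cast_id]
  rw [← mul_assoc]
  norm_cast
  rw [Int.units_mul_self, one_mul]

lemma rename_mrg_altM {i j : Fin n} (h : i ≠ j) (e : Fin n → ℕ) :
    rename (mrg i j) (altM n e) = 0 := by
  have h1 := altM_rename (Equiv.swap i j) e
  rw [Equiv.Perm.sign_swap h] at h1
  have h2 : rename (mrg i j) (altM n e) =
      rename (mrg i j) (rename (⇑(Equiv.swap i j)) (altM n e)) := by
    rw [rename_rename, mrg_comp_swap h]
  rw [h1] at h2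
  simp only [Units.val_neg, Units.val_one, neg_smul, one_smul, map_neg] at h2
  have h3 : (2 : MvPolynomial (Fin n) ℤ) * rename (mrg i j) (altM n e) = 0 := by
    rw [two_mul]
    nth_rewrite 1 [h2]
    ring
  rcases mul_eq_zero.mp h3 with h4 | h4
  · exact absurd h4 two_ne_zero
  · exact h4

lemma X_sub_X_dvd_sub_rename (i j : Fin n) (P : MvPolynomial (Fin n) ℤ) :
    ((X i : MvPolynomial (Fin n) ℤ) - X j) ∣ (P - rename (mrg i j) P) := by
  induction P using MvPolynomial.induction_on with
  | C a => simp
  | add p q hp hq =>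
    have : p + q - rename (mrg i j) (p + q) =
        (p - rename (mrg i j) p) + (q - rename (mrg i j) q) := by
      rw [map_add]; ring
    rw [this]; exact dvd_add hp hq
  | mul_X p s hp =>
    have hk : p * X s - rename (mrg i j) (p * X s) =
        (p - rename (mrg i j) p) * X s +
          rename (mrg i j) p * ((X s : MvPolynomial (Fin n) ℤ) - X (mrg i j s)) := by
      rw [map_mul, rename_X]; ring
    rw [hk]
    refine dvd_add (hp.mul_right _) ?_
    by_cases hs : s = i
    · subst hs
      have : mrg s j s = j := by simp [mrg]
      rw [this]
      exact Dvd.dvd.mul_left dvd_rfl _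
    · have : mrg i j s = s := by simp [mrg, hs]
      rw [this]
      simp

lemma X_sub_X_dvd_altM {i j : Fin n} (h : i ≠ j) (e : Fin n → ℕ) :
    ((X i : MvPolynomial (Fin n) ℤ) - X j) ∣ altM n e := by
  have := X_sub_X_dvd_sub_rename i j (altM n e)
  rwa [rename_mrg_altM h, sub_zero] at this

lemma prime_X_sub_X {i j : Fin n} (h : i ≠ j) :
    Prime ((X i : MvPolynomial (Fin n) ℤ) - X j) := by
  classical
  let e1 : Option {t : Fin n // t ≠ i} ≃ Fin n := Equiv.optionSubtypeNe i
  let φ := (renameEquiv ℤ e1.symm).trans (optionEquivLeft ℤ {t : Fin n // t ≠ i})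
  rw [← MulEquiv.prime_iff φ.toMulEquiv]
  have hφ : φ ((X i : MvPolynomial (Fin n) ℤ) - X j) =
      Polynomial.X - Polynomial.C (X ⟨j, h.symm⟩) := by
    have hXi : e1.symm i = none := Equiv.optionSubtypeNe_symm_self i
    have hXj : e1.symm j = some ⟨j, h.symm⟩ := Equiv.optionSubtypeNe_symm_of_ne h.symm
    simp only [φ, AlgEquiv.trans_apply, map_sub, renameEquiv_apply, rename_X, hXi, hXj,
      optionEquivLeft_X_none, optionEquivLeft_X_some]
  rw [show φ.toMulEquiv ((X i : MvPolynomial (Fin n) ℤ) - X j) = φ ((X i : MvPolynomial (Fin n) ℤ) - X j) from rfl, hφ]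
  exact Polynomial.prime_X_sub_C _

lemma not_X_sub_X_dvd {i j k l : Fin n} (hij : i < j) (hkl : k < l)
    (hne : ¬(i = k ∧ j = l)) :
    ¬((X j : MvPolynomial (Fin n) ℤ) - X i) ∣ ((X l : MvPolynomial (Fin n) ℤ) - X k) := by
  rintro ⟨c, hc⟩
  have hji : j ≠ i := hij.ne'
  have hthis := congrArg (rename (mrg j i)) hc
  rw [map_sub, map_mul, map_sub, rename_X, rename_X, rename_X, rename_X] at hthis
  have hmj : mrg j i j = i := by simp [mrg]
  have hmi : mrg j i i = i := by simp [mrg, hij.ne]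
  rw [hmj, hmi, sub_self, zero_mul, sub_eq_zero] at hthis
  have heq : mrg j i l = mrg j i k := MvPolynomial.X_injective hthis
  by_cases hlj : l = j
  · by_cases hkj : k = j
    · exact hkl.ne (hkj.trans hlj.symm)
    · have h5 : mrg j i l = i := by simp [mrg, hlj]
      have h6 : mrg j i k = k := by simp [mrg, hkj]
      rw [h5, h6] at heq
      exact hne ⟨heq, hlj.symm⟩
  · by_cases hkj : k = j
    · have h5 : mrg j i l = l := by simp [mrg, hlj]
      have h6 : mrg j i k = i := by simp [mrg, hkj]
      rw [h5, h6] at heq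
      have hik : i < k := hkj ▸ hij
      have hki : k < i := heq ▸ hkl
      exact lt_asymm hik hki
    · have h5 : mrg j i l = l := by simp [mrg, hlj]
      have h6 : mrg j i k = k := by simp [mrg, hkj]
      rw [h5, h6] at heq
      exact hkl.ne' heq

/-- Product of pairwise non-associate primes each dividing `P` divides `P`. -/
lemma prod_primes_dvd {α : Type*} [CommRing α] {ι : Type*} [DecidableEq ι]
    (S : Finset ι) (g : ι → α) (P : α)
    (hp : ∀ p ∈ S, Prime (g p)) (hd : ∀ p ∈ S, g p ∣ P)
    (hcop : ∀ p ∈ S, ∀ q ∈ S, p ≠ q → ¬g p ∣ g q) :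
    (∏ p ∈ S, g p) ∣ P := by
  induction S using Finset.induction_on with
  | empty => simpa using one_dvd P
  | @insert a S' ha IH =>
    rw [Finset.prod_insert ha]
    obtain ⟨Q, hQ⟩ := IH (fun p hp' => hp p (Finset.mem_insert_of_mem hp'))
      (fun p hp' => hd p (Finset.mem_insert_of_mem hp'))
      (fun p hp' q hq' hpq => hcop p (Finset.mem_insert_of_mem hp') q
        (Finset.mem_insert_of_mem hq') hpq)
    have hga : Prime (g a) := hp a (Finset.mem_insert_self a S')
    have hdvd : g a ∣ (∏ p ∈ S', g p) * Q := hQ ▸ hd a (Finset.mem_insert_self a S')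
    rcases hga.2.2 _ _ hdvd with h1 | h2
    · exfalso
      obtain ⟨q, hq, hdq⟩ := (hga.dvd_finset_prod_iff _).mp h1
      exact hcop a (Finset.mem_insert_self a S') q (Finset.mem_insert_of_mem hq)
        (fun h => ha (h ▸ hq)) hdq
    · obtain ⟨R, hR⟩ := h2
      exact ⟨R, by rw [hQ, hR]; ring⟩

lemma vandM_dvd_altM (e : Fin n → ℕ) : vandM n ∣ altM n e := by
  classical
  have hprod : vandM n =
      ∏ p ∈ (Finset.univ.sigma fun i : Fin n => Finset.Ioi i),
        ((X p.2 : MvPolynomial (Fin n) ℤ) - X p.1) := by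
    rw [Finset.prod_sigma]
    rfl
  rw [hprod]
  refine prod_primes_dvd _ _ _ ?_ ?_ ?_
  · rintro ⟨p1, p2⟩ hp
    simp only [Finset.mem_sigma, Finset.mem_Ioi] at hp
    exact prime_X_sub_X hp.2.ne'
  · rintro ⟨p1, p2⟩ hp
    simp only [Finset.mem_sigma, Finset.mem_Ioi] at hp
    exact X_sub_X_dvd_altM hp.2.ne' e
  · rintro ⟨p1, p2⟩ hp ⟨q1, q2⟩ hq hpq
    simp only [Finset.mem_sigma, Finset.mem_Ioi] at hp hq
    refine not_X_sub_X_dvd hp.2 hq.2 ?_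
    rintro ⟨h1, h2⟩
    exact hpq (by subst h1; subst h2; rfl)

lemma altM_rho_dvd (e : Fin n → ℕ) :
    altM n (fun i => n - 1 - (i : ℕ)) ∣ altM n e := by
  set ε : ℤˣ := Equiv.Perm.sign (Fin.revPerm : Equiv.Perm (Fin n)) with hε
  have h1 : altM n (fun i => n - 1 - (i : ℕ)) =
      ((ε : ℤ) : MvPolynomial (Fin n) ℤ) * vandM n := altM_rho_eq
  have h2 : vandM n = ((ε : ℤ) : MvPolynomial (Fin n) ℤ) * altM n (fun i => n - 1 - (i : ℕ)) := by
    rw [h1, ← mul_assoc, ← Int.cast_mul]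
    norm_cast
    rw [Int.units_mul_self]
    simp
  calc altM n (fun i => n - 1 - (i : ℕ)) ∣ vandM n := Dvd.intro_left _ h2.symm
    _ ∣ altM n e := vandM_dvd_altM e

section ToLaurent

variable (k : Type*) [CommRing k]

/-- The canonical map `ℤ[x_1,…,x_n] → k[x_1^{±1},…,x_n^{±1}]`. -/
noncomputable def toL (n : ℕ) : MvPolynomial (Fin n) ℤ →+* Laurent k n :=
  MvPolynomial.eval₂Hom (Int.castRingHom (Laurent k n))
    (fun i => AddMonoidAlgebra.single (Pi.single i (1 : ℤ)) (1 : k))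

lemma prod_single {ι : Type*} (s : Finset ι) (f : ι → (Fin n → ℤ)) :
    (∏ i ∈ s, (AddMonoidAlgebra.single (f i) (1 : k) : Laurent k n)) =
      AddMonoidAlgebra.single (∑ i ∈ s, f i) 1 := by
  classical
  induction s using Finset.induction_on with
  | empty => simp [AddMonoidAlgebra.one_def]
  | @insert a s' ha IH =>
    rw [Finset.prod_insert ha, Finset.sum_insert ha, IH, AddMonoidAlgebra.single_mul_single,
      one_mul]

lemma toL_monomial (v : Fin n → ℕ) :
    toL k n (monomial (Finsupp.equivFunOnFinite.symm v) (1 : ℤ)) =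
      AddMonoidAlgebra.single (fun i => (v i : ℤ)) 1 := by
  rw [toL, coe_eval₂Hom, eval₂_monomial, map_one, one_mul, Finsupp.prod_fintype]
  · have : ∀ i : Fin n,
        (AddMonoidAlgebra.single (Pi.single i (1 : ℤ)) (1 : k) : Laurent k n) ^ v i =
          AddMonoidAlgebra.single ((v i : ℕ) • Pi.single i (1 : ℤ)) 1 := by
      intro i
      rw [AddMonoidAlgebra.single_pow, one_pow]
    simp only [Finsupp.coe_equivFunOnFinite_symm, this]
    rw [prod_single]
    congr 1
    funext t
    simp only [Finset.sum_apply, Pi.smul_apply, Pi.single_apply, smul_eq_mul]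
    rw [Finset.sum_eq_single t]
    · simp
    · intro b _ hb
      simp [hb.symm]
    · simp
  · intro i; exact pow_zero _

lemma toL_altM (e : Fin n → ℕ) :
    toL k n (altM n e) = alternant k n (fun i => (e i : ℤ)) := by
  rw [altM, map_sum, alternant]
  refine Finset.sum_congr rfl fun w _ => ?_
  rw [map_zsmul, toL_monomial]
  rfl

end ToLaurent

lemma alternant_shift (k : Type*) [CommRing k] (v : Fin n → ℤ) (c : ℤ) :
    alternant k n (fun i => v i + c) =
      AddMonoidAlgebra.single (fun _ => c) (1 : k) * alternant k n v := by
  rw [alternant, alternant, Finset.mul_sum]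
  refine Finset.sum_congr rfl fun w _ => ?_
  rw [mul_smul_comm, AddMonoidAlgebra.single_mul_single, one_mul]
  have hh : ((fun i => v i + c) ∘ ⇑w⁻¹) = ((fun _ => c) + v ∘ ⇑w⁻¹) := by
    funext t
    simp [Function.comp]
    ring
  rw [hh]

end AlternantAux

open AlternantAux

/-- Lemma: for any snake `λ` (i.e. `λ_1 ≥ λ_2 ≥ ⋯ ≥ λ_n`), the alternant `a_{λ+ρ}`
is a multiple of `a_ρ` in the Laurent polynomial ring. -/
theorem alternant_rho_dvd (k : Type*) [CommRing k] (n : ℕ) (hn : 0 < n)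
    (lam : Fin n → ℤ) (hlam : Antitone lam) :
    ∃ s : Laurent k n, alternant k n (fun i => lam i + rho n i) = alternant k n (rho n) * s := by
  classical
  set m : Fin n := ⟨n - 1, by omega⟩ with hm
  set c : ℤ := lam m with hc
  have hge : ∀ i : Fin n, c ≤ lam i := by
    intro i
    refine hlam ?_
    have := i.isLt
    simp only [hm, Fin.le_def]
    omega
  set μ : Fin n → ℕ := fun i => (lam i - c).toNat with hμ
  set eN : Fin n → ℕ := fun i => μ i + (n - 1 - (i : ℕ)) with heN
  have h1 : altM n (fun i => n - 1 - (i : ℕ)) ∣ altM n eN := altM_rho_dvd eN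
  have h2 : toL k n (altM n (fun i => n - 1 - (i : ℕ))) ∣ toL k n (altM n eN) :=
    map_dvd (toL k n) h1
  rw [toL_altM, toL_altM] at h2
  have hρ : (fun i : Fin n => (((n - 1 - (i : ℕ) : ℕ)) : ℤ)) = rho n := by
    funext i
    have := i.isLt
    simp only [rho]
    omega
  have he : (fun i : Fin n => ((eN i : ℕ) : ℤ)) = fun i => (lam i - c) + rho n i := by
    funext i
    have h3 := hge i
    have h4 := i.isLt
    simp only [heN, hμ, rho, Nat.cast_add]
    omega
  rw [hρ, he] at h2
  obtain ⟨s, hs⟩ := h2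
  refine ⟨AddMonoidAlgebra.single (fun _ => c) (1 : k) * s, ?_⟩
  have hshift := alternant_shift (n := n) k (fun i => lam i - c + rho n i) c
  have hexp : (fun i => (lam i - c + rho n i) + c) = fun i => lam i + rho n i := by
    funext i; ring
  rw [hexp] at hshift
  rw [hshift, hs]
  ring
end
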